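/- Let m ≥ 3 be an integer and let A be a smooth positive function on an open cone C ⊆ ℝⁿ∖{0} that is positively homogeneous of degree m (A(λy) = λᵐA(y) for all λ > 0), and suppose the Hessian matrix (A_{ij}) = (∂²A/∂y^i∂y^j) is invertible on C, with inverse (A^{ij}). Set F = A^{1/m} and g_{ij} = ½ ∂²(F²)/∂y^i∂y^j. Then: (a) g_{ij} = (A^{(2/m)−2}/m²)[mA·A_{ij} + (2−m)A_iA_j], where A_i = ∂A/∂y^i; and (b) the matrix (g_{ij}) is invertible with inverse g^{ij} = A^{−2/m}[mA·A^{ij} + ((m−2)/(m−1)) y^i y^j]. -/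

import Mathlib

open scoped BigOperators
open Matrix Topology

noncomputable section

/-- Partial derivative of `f` in the `i`-th coordinate direction at `v`. -/
def pd {n : ℕ} (f : (Fin n → ℝ) → ℝ) (i : Fin n) (v : Fin n → ℝ) : ℝ :=
  fderiv ℝ f v (Pi.single i 1)

lemma vec_sum {n : ℕ} (L : (Fin n → ℝ) →L[ℝ] ℝ) (y : Fin n → ℝ) :
    L y = ∑ i, y i * L (Pi.single i 1) := by
  conv_lhs => rw [← Finset.univ_sum_single y]
  rw [map_sum]
  refine Finset.sum_congr rfl fun i _ => ?_
  have : Pi.single i (y i) = y i • (Pi.single i 1 : Fin n → ℝ) := by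
    rw [← Pi.single_smul, smul_eq_mul, mul_one]
  rw [this, _root_.map_smul, smul_eq_mul]

lemma euler {n : ℕ} (f : (Fin n → ℝ) → ℝ) (y : Fin n → ℝ) (k : ℕ)
    (hd : DifferentiableAt ℝ f y)
    (hh : ∀ t : ℝ, 0 < t → f (t • y) = t ^ k * f y) :
    fderiv ℝ f y y = k * f y := by
  have hsm : HasDerivAt (fun t : ℝ => t • y) ((1:ℝ) • y) 1 := (hasDerivAt_id 1).smul_const y
  have hfd : HasFDerivAt f (fderiv ℝ f y) ((fun t : ℝ => t • y) 1) := by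
    simpa using hd.hasFDerivAt
  have h1 : HasDerivAt (fun t : ℝ => f (t • y)) (fderiv ℝ f y ((1:ℝ) • y)) 1 := by
    exact hfd.comp_hasDerivAt 1 hsm
  rw [one_smul] at h1
  have h2 : HasDerivAt (fun t : ℝ => t ^ k * f y) ((k * 1 ^ (k - 1)) * f y) 1 :=
    (hasDerivAt_pow k 1).mul_const (f y)
  have heq : (fun t : ℝ => t ^ k * f y) =ᶠ[𝓝 (1:ℝ)] fun t => f (t • y) := by
    filter_upwards [eventually_gt_nhds (zero_lt_one)] with t ht
    rw [hh t ht]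
  have h2' : HasDerivAt (fun t : ℝ => f (t • y)) ((k * 1 ^ (k - 1)) * f y) 1 :=
    h2.congr_of_eventuallyEq heq.symm
  have := h1.unique h2'
  simpa using this

lemma euler_sum {n : ℕ} (f : (Fin n → ℝ) → ℝ) (y : Fin n → ℝ) (k : ℕ)
    (hd : DifferentiableAt ℝ f y)
    (hh : ∀ t : ℝ, 0 < t → f (t • y) = t ^ k * f y) :
    ∑ i, y i * pd f i y = k * f y := by
  rw [← euler f y k hd hh]
  exact (vec_sum (fderiv ℝ f y) y).symm

set_option maxHeartbeats 1000000 in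
/-- for an m-homogeneous positive `A` with invertible Hessian on an
open cone, and `F = A^{1/m}`, the fundamental tensor is
`g_{ij} = (A^{(2/m)−2}/m²)[mA·A_{ij} + (2−m)A_iA_j]`, and its inverse is
`g^{ij} = A^{−2/m}[mA·A^{ij} + ((m−2)/(m−1))y^iy^j]`. -/
theorem mth_root_fundamental_tensor_and_inverse
    (n m : ℕ) (hm : 3 ≤ m)
    (C : Set (Fin n → ℝ)) (hCopen : IsOpen C) (hCne : ∀ y ∈ C, y ≠ (0 : Fin n → ℝ))
    (hCcone : ∀ y ∈ C, ∀ t : ℝ, 0 < t → t • y ∈ C)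
    (A : (Fin n → ℝ) → ℝ) (hAsm : ContDiffOn ℝ (⊤:ℕ∞) A C)
    (hApos : ∀ y ∈ C, 0 < A y)
    (hAhom : ∀ y ∈ C, ∀ t : ℝ, 0 < t → A (t • y) = t ^ m * A y)
    (AH : (Fin n → ℝ) → Matrix (Fin n) (Fin n) ℝ)
    (hAH : ∀ y i j, AH y i j = pd (fun v => pd A j v) i y)
    (hAHinv : ∀ y ∈ C, IsUnit (AH y).det)
    (F : (Fin n → ℝ) → ℝ) (hF : ∀ y, F y = (A y) ^ ((1:ℝ)/(m:ℝ)))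
    (g : (Fin n → ℝ) → Matrix (Fin n) (Fin n) ℝ)
    (hg : ∀ y i j, g y i j = (1/2) * pd (fun v => pd (fun w => (F w)^2) j v) i y) :
    (∀ y ∈ C, ∀ i j, g y i j =
      ((A y) ^ ((2:ℝ)/(m:ℝ) - 2) / (m:ℝ)^2) *
        ((m:ℝ) * A y * AH y i j + (2 - (m:ℝ)) * pd A i y * pd A j y)) ∧
    (∀ y ∈ C,
      (Matrix.of fun i j => (A y) ^ (-(2:ℝ)/(m:ℝ)) *
          ((m:ℝ) * A y * (AH y)⁻¹ i j
            + (((m:ℝ) - 2)/((m:ℝ) - 1)) * y i * y j)) * g y = 1 ∧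
      g y * (Matrix.of fun i j => (A y) ^ (-(2:ℝ)/(m:ℝ)) *
          ((m:ℝ) * A y * (AH y)⁻¹ i j
            + (((m:ℝ) - 2)/((m:ℝ) - 1)) * y i * y j)) = 1) := by
  have hmR : (m:ℝ) ≠ 0 := by positivity
  have hm1 : (1:ℕ) ≤ m := by omega
  have hCn : ∀ ⦃y⦄, y ∈ C → C ∈ 𝓝 y := fun y hy => hCopen.mem_nhds hy
  have hAat : ∀ ⦃y⦄, y ∈ C → ContDiffAt ℝ (⊤:ℕ∞) A y := fun y hy => hAsm.contDiffAt (hCn hy)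
  have hAd : ∀ ⦃y⦄, y ∈ C → DifferentiableAt ℝ A y := fun y hy =>
    (hAat hy).differentiableAt (by simp)
  have hDAat : ∀ ⦃y⦄, y ∈ C → ContDiffAt ℝ (⊤:ℕ∞) (fderiv ℝ A) y := fun y hy =>
    (hAat hy).fderiv_right (by simp)
  have hpdat : ∀ (j : Fin n), ∀ ⦃y⦄, y ∈ C → ContDiffAt ℝ (⊤:ℕ∞) (fun v => pd A j v) y := by
    intro j y hy
    exact (hDAat hy).clm_apply contDiffAt_const
  have hpdd : ∀ (j : Fin n), ∀ ⦃y⦄, y ∈ C → DifferentiableAt ℝ (fun v => pd A j v) y :=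
    fun j y hy => ((hpdat j hy).differentiableAt (by simp))
  have E1 : ∀ ⦃y⦄, y ∈ C → ∑ i, y i * pd A i y = (m:ℝ) * A y := fun y hy =>
    euler_sum A y m (hAd hy) (fun t ht => hAhom y hy t ht)
  -- homogeneity of partial derivatives
  have hpdhom : ∀ ⦃y⦄, y ∈ C → ∀ t : ℝ, 0 < t → ∀ j, pd A j (t • y) = t ^ (m-1) * pd A j y := by
    intro y hy t ht j
    have hty : t • y ∈ C := hCcone y hy t ht
    set L : (Fin n → ℝ) →L[ℝ] (Fin n → ℝ) := t • ContinuousLinearMap.id ℝ _ with hLdef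
    have hL : HasFDerivAt (fun w : Fin n → ℝ => t • w) L y := by
      have := L.hasFDerivAt (x := y)
      convert this using 2
      simp [hLdef]
    have hA' : HasFDerivAt A (fderiv ℝ A (t • y)) ((fun w : Fin n → ℝ => t • w) y) :=
      (hAd hty).hasFDerivAt
    have h1 : HasFDerivAt (fun w => A (t • w)) ((fderiv ℝ A (t • y)).comp L) y :=
      hA'.comp y hL
    have h2 : HasFDerivAt (fun w => t ^ m * A w) ((t ^ m) • fderiv ℝ A y) y :=
      (hAd hy).hasFDerivAt.const_mul _
    have heq : (fun w => t ^ m * A w) =ᶠ[𝓝 y] (fun w => A (t • w)) := by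
      filter_upwards [hCn hy] with w hw
      exact (hAhom w hw t ht).symm
    have h3 : HasFDerivAt (fun w => A (t • w)) ((t ^ m) • fderiv ℝ A y) y :=
      h2.congr_of_eventuallyEq heq.symm
    have h4 := h1.unique h3
    have h5 := congrArg (fun (L' : (Fin n → ℝ) →L[ℝ] ℝ) => L' (Pi.single j 1)) h4
    simp only [ContinuousLinearMap.comp_apply, ContinuousLinearMap.coe_smul',
      Pi.smul_apply, ContinuousLinearMap.smul_apply, hLdef,
      ContinuousLinearMap.coe_id', id_eq, smul_eq_mul] at h5
    -- h5 : fderiv ℝ A (t • y) (t • Pi.single j 1) = t ^ m * fderiv ℝ A y (Pi.single j 1)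
    have h6 : t * pd A j (t • y) = t ^ m * pd A j y := by
      simpa [pd, _root_.map_smul, smul_eq_mul] using h5
    have hmm : t ^ m = t * t ^ (m - 1) := by
      conv_lhs => rw [show m = (m-1) + 1 by omega]
      ring
    rw [hmm, mul_assoc] at h6
    have := mul_left_cancel₀ (ne_of_gt ht) h6
    linarith [this]
  have E2 : ∀ ⦃y⦄, y ∈ C → ∀ j, ∑ i, y i * AH y i j = ((m:ℝ) - 1) * pd A j y := by
    intro y hy j
    have := euler_sum (fun v => pd A j v) y (m-1) (hpdd j hy)
      (fun t ht => hpdhom hy t ht j)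
    have hc : ((m - 1 : ℕ) : ℝ) = (m:ℝ) - 1 := by
      rw [Nat.cast_sub hm1]; norm_num
    rw [hc] at this
    rw [← this]
    refine Finset.sum_congr rfl fun i _ => ?_
    rw [hAH]
  have hsym : ∀ ⦃y⦄, y ∈ C → ∀ i j, AH y i j = AH y j i := by
    intro y hy i j
    have hkey : ∀ i' j' : Fin n, AH y i' j' =
        fderiv ℝ (fderiv ℝ A) y (Pi.single i' 1) (Pi.single j' 1) := by
      intro i' j'
      rw [hAH]
      have hc : DifferentiableAt ℝ (fderiv ℝ A) y := (hDAat hy).differentiableAt (by simp)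
      have := fderiv_clm_apply (c := fderiv ℝ A) (u := fun _ => (Pi.single j' 1 : Fin n → ℝ))
        hc (differentiableAt_const _)
      simp only [pd]
      rw [this]
      simp
    have hev : ∀ᶠ w in 𝓝 y, HasFDerivAt A (fderiv ℝ A w) w := by
      filter_upwards [hCn hy] with w hw
      exact (hAd hw).hasFDerivAt
    have h2nd : HasFDerivAt (fderiv ℝ A) (fderiv ℝ (fderiv ℝ A) y) y :=
      ((hDAat hy).differentiableAt (by simp)).hasFDerivAt
    rw [hkey i j, hkey j i]
    exact second_derivative_symmetric_of_eventually hev h2nd _ _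
  -- PART (a)
  have haa : ∀ y ∈ C, ∀ i j, g y i j =
      ((A y) ^ ((2:ℝ)/(m:ℝ) - 2) / (m:ℝ)^2) *
        ((m:ℝ) * A y * AH y i j + (2 - (m:ℝ)) * pd A i y * pd A j y) := by
    intro y hy i j
    have hstep1 : ∀ ⦃v⦄, v ∈ C → pd (fun w => (F w)^2) j v
        = ((2:ℝ)/m) * ((A v) ^ ((2:ℝ)/m - 1) * pd A j v) := by
      intro v hv
      have hpos : 0 < A v := hApos v hv
      have hev : (fun w => (F w)^2) =ᶠ[𝓝 v] (fun w => (A w) ^ ((2:ℝ)/m)) := by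
        filter_upwards [hCn hv] with w hw
        have hw0 : 0 < A w := hApos w hw
        rw [hF w, ← Real.rpow_natCast ((A w) ^ ((1:ℝ)/(m:ℝ))) 2,
          ← Real.rpow_mul hw0.le]
        norm_num
        congr 1
        ring
      have hfd : HasFDerivAt (fun w => (A w) ^ ((2:ℝ)/(m:ℝ)))
          ((((2:ℝ)/m) * (A v) ^ ((2:ℝ)/m - 1)) • fderiv ℝ A v) v :=
        (hAd hv).hasFDerivAt.rpow_const (Or.inl hpos.ne')
      have h2 : HasFDerivAt (fun w => (F w)^2)
          ((((2:ℝ)/m) * (A v) ^ ((2:ℝ)/m - 1)) • fderiv ℝ A v) v :=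
        hfd.congr_of_eventuallyEq hev
      rw [pd, h2.fderiv]
      simp only [ContinuousLinearMap.smul_apply, smul_eq_mul, pd]
      ring
    have hpos : 0 < A y := hApos y hy
    have hU : HasFDerivAt (fun v => (A v) ^ ((2:ℝ)/(m:ℝ) - 1))
        ((((2:ℝ)/m - 1) * (A y) ^ ((2:ℝ)/m - 1 - 1)) • fderiv ℝ A y) y :=
      (hAd hy).hasFDerivAt.rpow_const (Or.inl hpos.ne')
    have hV : HasFDerivAt (fun v => pd A j v) (fderiv ℝ (fun v => pd A j v) y) y :=
      (hpdd j hy).hasFDerivAt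
    have hW := (hU.mul hV).const_mul ((2:ℝ)/m)
    have hev2 : (fun v => pd (fun w => (F w)^2) j v) =ᶠ[𝓝 y]
        (fun v => ((2:ℝ)/m) * ((A v) ^ ((2:ℝ)/m - 1) * pd A j v)) := by
      filter_upwards [hCn hy] with w hw
      exact hstep1 hw
    have hfinal := hW.congr_of_eventuallyEq hev2
    rw [hg, pd, hfinal.fderiv]
    simp only [ContinuousLinearMap.smul_apply, ContinuousLinearMap.add_apply,
      smul_eq_mul]
    have hAHij : fderiv ℝ (fun v => pd A j v) y (Pi.single i 1) = AH y i j := by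
      rw [hAH]; rfl
    rw [hAHij]
    have hP1 : (A y) ^ ((2:ℝ)/m - 1) = (A y) ^ ((2:ℝ)/m - 2) * A y := by
      rw [show (2:ℝ)/m - 1 = ((2:ℝ)/m - 2) + 1 by ring, Real.rpow_add hpos,
        Real.rpow_one]
    have hP2 : (A y) ^ ((2:ℝ)/m - 1 - 1) = (A y) ^ ((2:ℝ)/m - 2) := by
      congr 1
      ring
    rw [hP1, hP2]
    show (1:ℝ)/2 * (2/m * ((A y ^ ((2:ℝ)/m - 2) * A y) * AH y i j
        + pd A j y * ((2/m - 1) * A y ^ ((2:ℝ)/m - 2) * pd A i y))) = _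
    field_simp
  -- PART (b)
  have hm3R : (3:ℝ) ≤ (m:ℝ) := by exact_mod_cast hm
  have hm1R : (m:ℝ) - 1 ≠ 0 := by linarith
  have hbb : ∀ y ∈ C,
      (Matrix.of fun i j => (A y) ^ (-(2:ℝ)/(m:ℝ)) *
          ((m:ℝ) * A y * (AH y)⁻¹ i j
            + (((m:ℝ) - 2)/((m:ℝ) - 1)) * y i * y j)) * g y = 1 := by
    intro y hy
    have hpos : 0 < A y := hApos y hy
    have haR : A y ≠ 0 := hpos.ne'
    have hHinv : (AH y)⁻¹ * AH y = 1 := Matrix.nonsing_inv_mul _ (hAHinv y hy)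
    have E2' : ∀ i, ∑ k, AH y i k * y k = ((m:ℝ) - 1) * pd A i y := by
      intro i
      rw [← E2 hy i]
      refine Finset.sum_congr rfl fun k _ => ?_
      rw [hsym hy i k]; ring
    have hIv : ∀ i, ∑ k, (AH y)⁻¹ i k * pd A k y = y i / ((m:ℝ) - 1) := by
      intro i
      have hmv : (AH y) *ᵥ y = ((m:ℝ) - 1) • (fun k => pd A k y) := by
        funext k
        simp only [Matrix.mulVec, dotProduct, Pi.smul_apply, smul_eq_mul]
        exact E2' k
      have h2 : (AH y)⁻¹ *ᵥ ((AH y) *ᵥ y) = y := by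
        rw [Matrix.mulVec_mulVec, hHinv, Matrix.one_mulVec]
      rw [hmv, Matrix.mulVec_smul] at h2
      have h3 := congrFun h2 i
      simp only [Pi.smul_apply, smul_eq_mul, Matrix.mulVec, dotProduct] at h3
      rw [eq_div_iff hm1R, mul_comm]
      exact h3
    have hX : (A y) ^ (-(2:ℝ)/(m:ℝ)) * (A y) ^ ((2:ℝ)/(m:ℝ) - 2) = (A y * A y)⁻¹ := by
      rw [← Real.rpow_add hpos, show -(2:ℝ)/m + ((2:ℝ)/m - 2) = -((2:ℕ):ℝ) by push_cast; ring,
        Real.rpow_neg hpos.le, Real.rpow_natCast]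
      rw [sq]
    ext i j
    rw [Matrix.mul_apply]
    simp only [Matrix.of_apply]
    have expand : ∀ k, (A y) ^ (-(2:ℝ)/(m:ℝ)) *
          ((m:ℝ) * A y * (AH y)⁻¹ i k + (((m:ℝ) - 2)/((m:ℝ) - 1)) * y i * y k) * g y k j
        = ((A y) ^ (-(2:ℝ)/(m:ℝ)) * (A y) ^ ((2:ℝ)/(m:ℝ) - 2)) * (A y * A y) * ((AH y)⁻¹ i k * AH y k j)
          + ((A y) ^ (-(2:ℝ)/(m:ℝ)) * (A y) ^ ((2:ℝ)/(m:ℝ) - 2)) * (A y * (2 - (m:ℝ)) / (m:ℝ)) * pd A j y * ((AH y)⁻¹ i k * pd A k y)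
          + ((A y) ^ (-(2:ℝ)/(m:ℝ)) * (A y) ^ ((2:ℝ)/(m:ℝ) - 2)) * ((((m:ℝ) - 2)/((m:ℝ) - 1)) * (A y / (m:ℝ))) * y i * (y k * AH y k j)
          + ((A y) ^ (-(2:ℝ)/(m:ℝ)) * (A y) ^ ((2:ℝ)/(m:ℝ) - 2)) * ((((m:ℝ) - 2)/((m:ℝ) - 1)) * (2 - (m:ℝ)) / (m:ℝ)^2) * y i * pd A j y * (y k * pd A k y) := by
      intro k
      rw [haa y hy k j]
      field_simp
      ring
    rw [Finset.sum_congr rfl (fun k _ => expand k)]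
    rw [Finset.sum_add_distrib, Finset.sum_add_distrib, Finset.sum_add_distrib,
      ← Finset.mul_sum, ← Finset.mul_sum, ← Finset.mul_sum, ← Finset.mul_sum]
    have hHH : ∑ k, (AH y)⁻¹ i k * AH y k j = (1 : Matrix (Fin n) (Fin n) ℝ) i j := by
      rw [← Matrix.mul_apply, hHinv]
    rw [hHH, hIv i, E2 hy j, E1 hy, hX]
    rcases eq_or_ne i j with rfl | hij
    · simp only [Matrix.one_apply_eq]
      field_simp
      ring
    · simp only [Matrix.one_apply_ne hij]
      field_simp
      ring
  refine ⟨haa, fun y hy => ⟨hbb y hy, mul_eq_one_comm.mp (hbb y hy)⟩⟩
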